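/- Signed cumulative bound: if fl_1,…,fl_n round to nearest in a perfect system with unit roundoff u and 20nu < 1, then for arbitrary real y_0,…,y_n the recursively rounded sum satisfies |ŝ_n − Σ_{k=0}^n y_k| ≤ (u/(1 − (n−2)u))·Σ_{k=1}^n |Σ_{i=0}^k y_i|. -/

import Mathlib

noncomputable section

/-- The set of positive normal floating point numbers with exponent `e`. -/
def Eset (β μ : ℕ) (e : ℤ) : Set ℝ :=
  {x | ∃ r : ℕ, r < (β - 1) * β ^ μ ∧ x = (β : ℝ) ^ e * ((β : ℝ) ^ μ + r)}

/-- Perfect floating point system: all integer exponents. -/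
def PerfectF (β μ : ℕ) : Set ℝ :=
  {x | x = 0 ∨ ∃ e : ℤ, x ∈ Eset β μ e ∨ -x ∈ Eset β μ e}

/-- MPFR system: exponents bounded below by `emin`, no subnormals. -/
def MPFRF (β μ : ℕ) (emin : ℤ) : Set ℝ :=
  {x | x = 0 ∨ ∃ e : ℤ, emin ≤ e ∧ (x ∈ Eset β μ e ∨ -x ∈ Eset β μ e)}

/-- Subnormal numbers (both signs) for minimal exponent `emin`. -/
def SubN (β μ : ℕ) (emin : ℤ) : Set ℝ :=
  {x | ∃ r : ℕ, 1 ≤ r ∧ r < β ^ μ ∧ (x = (β : ℝ) ^ emin * r ∨ x = -((β : ℝ) ^ emin * r))}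

/-- IEEE system: MPFR system augmented with subnormal numbers. -/
def IEEEF (β μ : ℕ) (emin : ℤ) : Set ℝ := MPFRF β μ emin ∪ SubN β μ emin

/-- `fl` rounds to nearest in `F`. -/
def RTN (F : Set ℝ) (fl : ℝ → ℝ) : Prop :=
  ∀ z : ℝ, fl z ∈ F ∧ ∀ x ∈ F, |fl z - z| ≤ |x - z|

/-- Recursively rounded sum: `rsum fl y 0 = y 0`,
`rsum fl y (k+1) = fl (k+1) (rsum fl y k + y (k+1))`. -/
def rsum (fl : ℕ → ℝ → ℝ) (y : ℕ → ℝ) : ℕ → ℝ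
  | 0 => y 0
  | k + 1 => fl (k + 1) (rsum fl y k + y (k + 1))

/-- Ties are broken downward. -/
def BreaksTiesDown (F : Set ℝ) (fl : ℝ → ℝ) : Prop :=
  ∀ z : ℝ, ∀ x ∈ F, |x - z| = |fl z - z| → fl z ≤ x

/-- Ties are broken upward. -/
def BreaksTiesUp (F : Set ℝ) (fl : ℝ → ℝ) : Prop :=
  ∀ z : ℝ, ∀ x ∈ F, |x - z| = |fl z - z| → x ≤ fl z

lemma fp_mem_perfect (β μ : ℕ) (hβ : 2 ≤ β) (hμ : 1 ≤ μ) (e : ℤ) (r : ℕ)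
    (hr : r ≤ (β - 1) * β ^ μ) :
    (β : ℝ) ^ e * ((β : ℝ) ^ μ + r) ∈ PerfectF β μ := by
  rcases lt_or_eq_of_le hr with h | h
  · exact Or.inr ⟨e, Or.inl ⟨r, h, rfl⟩⟩
  · refine Or.inr ⟨e + 1, Or.inl ⟨0, ?_, ?_⟩⟩
    · have : 1 ≤ β - 1 := by omega
      have : 1 ≤ β ^ μ := Nat.one_le_pow _ _ (by omega)
      exact Nat.mul_pos (by omega) (by omega)
    · have hrr : (r : ℝ) = ((β : ℝ) - 1) * (β : ℝ) ^ μ := by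
        rw [h]; push_cast [Nat.cast_sub (by omega : 1 ≤ β)]; ring
      rw [hrr, zpow_add_one₀ (by positivity : (β:ℝ) ≠ 0)]
      push_cast; ring

lemma fp_exists_near (β μ : ℕ) (hβ : 2 ≤ β) (hμ : 1 ≤ μ) (z : ℝ) (hz : 0 < z) :
    ∃ x ∈ PerfectF β μ, |x - z| ≤ (1 / (2 * (β : ℝ) ^ μ + 1)) * z := by
  set B : ℝ := (β : ℝ) ^ μ with hBdef
  have hβ1 : (1 : ℝ) < (β : ℝ) := by exact_mod_cast by omega
  have hB1 : (1 : ℝ) ≤ B := one_le_pow₀ (le_of_lt hβ1)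
  have hB0 : (0 : ℝ) < B := by linarith
  set e0 : ℤ := ⌊Real.logb β z⌋ with he0
  set E : ℝ := (β : ℝ) ^ e0 with hE
  have hE0 : 0 < E := by positivity
  have hE1 : E ≤ z := by
    have := ((Real.le_logb_iff_rpow_le hβ1 hz).mp (Int.floor_le _ : (e0:ℝ) ≤ Real.logb β z))
    rwa [Real.rpow_intCast] at this
  have hE2 : z < (β : ℝ) * E := by
    have h1 : Real.logb β z < ((e0 + 1 : ℤ) : ℝ) := by
      push_cast; exact Int.lt_floor_add_one _
    have := (Real.logb_lt_iff_lt_rpow hβ1 hz).mp h1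
    rwa [Real.rpow_intCast, zpow_add_one₀ (by positivity : (β:ℝ) ≠ 0), mul_comm] at this
  set e : ℤ := e0 - μ with he
  have hEb : (β : ℝ) ^ e * B = E := by
    rw [hE, he, hBdef, ← zpow_natCast (β:ℝ) μ, ← zpow_add₀ (by positivity : (β:ℝ) ≠ 0)]
    ring_nf
  set h : ℝ := (β : ℝ) ^ e with hh
  have hh0 : 0 < h := by positivity
  have hhB : h * B = E := hEb
  by_cases hcase : z * (2 * B) ≤ E * (2 * B + 1)
  · -- close to E : use x = E
    refine ⟨E, ?_, ?_⟩
    · have := fp_mem_perfect β μ hβ hμ e 0 (le_of_lt (by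
        have : 1 ≤ β - 1 := by omega
        have : 1 ≤ β ^ μ := Nat.one_le_pow _ _ (by omega)
        exact Nat.mul_pos (by omega) (by omega)))
      rw [← hEb]; simpa [hBdef] using this
    · rw [abs_of_nonpos (by linarith), neg_sub]
      rw [div_mul_eq_mul_div, le_div_iff₀ (by linarith)]
      nlinarith
  · -- use nearest grid point
    push_neg at hcase
    set w : ℝ := (z - E) / h with hw
    have hw0 : 0 ≤ w := div_nonneg (by linarith) (le_of_lt hh0)
    set r : ℤ := ⌊w + 1/2⌋ with hr
    have hr0 : 0 ≤ r := Int.floor_nonneg.mpr (by linarith)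
    have hrle : (r : ℝ) ≤ w + 1/2 := Int.floor_le _
    have hrgt : w - 1/2 < (r : ℝ) := by
      have := Int.lt_floor_add_one (w + 1/2)
      linarith
    have hM : (((β - 1) * β ^ μ : ℕ) : ℝ) = ((β : ℝ) - 1) * B := by
      push_cast [Nat.cast_sub (by omega : 1 ≤ β)]; rfl
    have hwlt : w < ((β : ℝ) - 1) * B := by
      rw [hw, div_lt_iff₀ hh0]
      nlinarith
    have hrM : r.toNat ≤ (β - 1) * β ^ μ := by
      have h1 : (r : ℝ) < (((β - 1) * β ^ μ : ℕ) : ℝ) + 1 := by rw [hM]; linarith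
      have h2 : r < ((β - 1) * β ^ μ : ℕ) + 1 := by exact_mod_cast h1
      omega
    refine ⟨(β : ℝ) ^ e * (B + r.toNat), fp_mem_perfect β μ hβ hμ e r.toNat hrM, ?_⟩
    have hrnat : ((r.toNat : ℕ) : ℝ) = (r : ℝ) := by
      exact_mod_cast Int.toNat_of_nonneg hr0
    have hzE : z - E = w * h := by rw [hw]; field_simp
    have hx : (β : ℝ) ^ e * (B + r.toNat) = E + r * h := by
      rw [hrnat, mul_add, hEb]; ring
    rw [hx]
    have hd : |E + r * h - z| ≤ h / 2 := by
      rw [abs_le]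
      have h1 := mul_lt_mul_of_pos_right hrgt hh0
      have h2 := mul_le_mul_of_nonneg_right hrle (le_of_lt hh0)
      constructor
      · nlinarith
      · nlinarith
    refine le_trans hd ?_
    rw [div_mul_eq_mul_div, le_div_iff₀ (by linarith)]
    have : h = E / B := by rw [← hhB]; field_simp
    nlinarith

lemma fp_neg_mem (β μ : ℕ) {x : ℝ} (hx : x ∈ PerfectF β μ) : -x ∈ PerfectF β μ := by
  rcases hx with h | ⟨e, h | h⟩
  · exact Or.inl (by rw [h, neg_zero])
  · exact Or.inr ⟨e, Or.inr (by simpa using h)⟩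
  · exact Or.inr ⟨e, Or.inl (by simpa using h)⟩

lemma fp_zero_mem (β μ : ℕ) : (0 : ℝ) ∈ PerfectF β μ := Or.inl rfl

lemma fp_rtn_rel (β μ : ℕ) (hβ : 2 ≤ β) (hμ : 1 ≤ μ) (fl : ℝ → ℝ)
    (hfl : ∀ z : ℝ, fl z ∈ PerfectF β μ ∧ ∀ x ∈ PerfectF β μ, |fl z - z| ≤ |x - z|)
    (z : ℝ) : |fl z - z| ≤ (1 / (2 * (β : ℝ) ^ μ + 1)) * |z| := by
  rcases lt_trichotomy z 0 with hz | hz | hz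
  · obtain ⟨x, hx, hxz⟩ := fp_exists_near β μ hβ hμ (-z) (by linarith)
    have hb := (hfl z).2 (-x) (fp_neg_mem β μ hx)
    have : |-x - z| = |x - -z| := by rw [← abs_neg]; ring_nf
    rw [this] at hb
    calc |fl z - z| ≤ |x - -z| := hb
      _ ≤ 1 / (2 * (β:ℝ) ^ μ + 1) * (-z) := hxz
      _ = 1 / (2 * (β:ℝ) ^ μ + 1) * |z| := by rw [abs_of_neg hz]
  · have hb := (hfl z).2 0 (fp_zero_mem β μ)
    simp only [hz] at hb ⊢
    simpa using hb
  · obtain ⟨x, hx, hxz⟩ := fp_exists_near β μ hβ hμ z hz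
    calc |fl z - z| ≤ |x - z| := (hfl z).2 x hx
      _ ≤ 1 / (2 * (β:ℝ) ^ μ + 1) * z := hxz
      _ = 1 / (2 * (β:ℝ) ^ μ + 1) * |z| := by rw [abs_of_pos hz]

lemma fp_pow_bound (v : ℝ) (hv : 0 ≤ v) (m : ℕ) : (1 + v) ^ m * (1 - m * v) ≤ 1 := by
  induction m with
  | zero => simp
  | succ m ih =>
    have h1 : (0:ℝ) ≤ (1 + v) ^ m := by positivity
    have h2 : (1 + v) * (1 - ((m:ℝ) + 1) * v) ≤ 1 - m * v := by nlinarith [mul_nonneg (mul_nonneg (Nat.cast_nonneg m : (0:ℝ) ≤ m) hv) hv, mul_nonneg hv hv]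
    calc (1 + v) ^ (m + 1) * (1 - ((m + 1 : ℕ):ℝ) * v)
        = (1 + v) ^ m * ((1 + v) * (1 - ((m:ℝ) + 1) * v)) := by push_cast; ring
      _ ≤ (1 + v) ^ m * (1 - m * v) := by
          exact mul_le_mul_of_nonneg_left h2 h1
      _ ≤ 1 := ih


theorem stmt15 (β μ n : ℕ) (hβ : 2 ≤ β) (hμ : 1 ≤ μ) (hn : 1 ≤ n)
    (u : ℝ) (hu : u = 1 / (2 * (β : ℝ) ^ μ)) (hnu : 20 * (n : ℝ) * u < 1)
    (fl : ℕ → ℝ → ℝ) (hfl : ∀ k, 1 ≤ k → k ≤ n → RTN (PerfectF β μ) (fl k))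
    (y : ℕ → ℝ) :
    |rsum fl y n - ∑ k ∈ Finset.range (n + 1), y k| ≤
      (u / (1 - ((n : ℝ) - 2) * u)) *
        ∑ k ∈ Finset.Icc 1 n, |∑ i ∈ Finset.range (k + 1), y i| := by
  set B : ℝ := (β : ℝ) ^ μ with hB
  have hβ1 : (1 : ℝ) < (β : ℝ) := by exact_mod_cast by omega
  have hB1 : (1 : ℝ) ≤ B := one_le_pow₀ (le_of_lt hβ1)
  have hB0 : (0 : ℝ) < B := by linarith
  have hu0 : 0 < u := by rw [hu]; positivity
  set v : ℝ := 1 / (2 * B + 1) with hv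
  have hv0 : 0 < v := by rw [hv]; positivity
  have hvu : v ≤ u := by
    rw [hu, hv]
    apply one_div_le_one_div_of_le <;> linarith
  have hnn : (0 : ℝ) ≤ (n : ℝ) := Nat.cast_nonneg n
  have hnu' : (n : ℝ) * u < 1 / 20 := by nlinarith
  have hrel : ∀ k, 1 ≤ k → k ≤ n → ∀ z : ℝ, |fl k z - z| ≤ v * |z| := by
    intro k h1 h2 z
    exact fp_rtn_rel β μ hβ hμ (fl k) (hfl k h1 h2) z
  have key : ∀ k, k ≤ n → |rsum fl y k - ∑ i ∈ Finset.range (k + 1), y i| ≤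
      v * ∑ j ∈ Finset.Icc 1 k, (1 + v) ^ (k - j) * |∑ i ∈ Finset.range (j + 1), y i| := by
    intro k
    induction k with
    | zero => intro _; simp [rsum]
    | succ k ih =>
      intro hk
      have IH := ih (by omega)
      have hstep := hrel (k + 1) (by omega) hk (rsum fl y k + y (k + 1))
      set sk : ℝ := ∑ i ∈ Finset.range (k + 1), y i with hsk
      set sk1 : ℝ := ∑ i ∈ Finset.range (k + 2), y i with hsk1
      have hss : sk1 = sk + y (k + 1) := Finset.sum_range_succ y (k + 1)
      set ek : ℝ := rsum fl y k - sk with hek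
      have hw : rsum fl y k + y (k + 1) = sk1 + ek := by rw [hss]; ring
      have h1 : |rsum fl y (k + 1) - sk1| ≤ v * |sk1 + ek| + |ek| := by
        have hsplit : rsum fl y (k + 1) - sk1 =
            (fl (k + 1) (rsum fl y k + y (k + 1)) - (rsum fl y k + y (k + 1))) + ek := by
          simp only [rsum]; rw [hss]; ring
        calc |rsum fl y (k + 1) - sk1| ≤
            |fl (k + 1) (rsum fl y k + y (k + 1)) - (rsum fl y k + y (k + 1))| + |ek| := by
              rw [hsplit]; exact abs_add_le _ _
          _ ≤ v * |rsum fl y k + y (k + 1)| + |ek| := by linarith [hstep]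
          _ = v * |sk1 + ek| + |ek| := by rw [hw]
      have h2 : |sk1 + ek| ≤ |sk1| + |ek| := abs_add_le _ _
      set S : ℝ := ∑ j ∈ Finset.Icc 1 k, (1 + v) ^ (k - j) * |∑ i ∈ Finset.range (j + 1), y i|
        with hS
      have hsum : ∑ j ∈ Finset.Icc 1 (k + 1), (1 + v) ^ (k + 1 - j) *
          |∑ i ∈ Finset.range (j + 1), y i| = (1 + v) * S + |sk1| := by
        rw [Finset.sum_Icc_succ_top (by omega : 1 ≤ k + 1)]
        congr 1
        · rw [hS, Finset.mul_sum]
          apply Finset.sum_congr rfl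
          intro j hj
          have hjk : j ≤ k := (Finset.mem_Icc.mp hj).2
          rw [show k + 1 - j = (k - j) + 1 by omega, pow_succ]
          ring
        · simp [hsk1]
      rw [hsum]
      have h3 : (1 + v) * |ek| ≤ (1 + v) * (v * S) :=
        mul_le_mul_of_nonneg_left IH (by linarith)
      nlinarith [abs_nonneg ek, abs_nonneg sk1]
  have hmain := key n le_rfl
  set m : ℕ := n - 1 with hm
  have hmr : (m : ℝ) = (n : ℝ) - 1 := by
    rw [hm]; push_cast [Nat.cast_sub hn]; ring
  have hd1 : 0 < 1 - (m : ℝ) * v := by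
    have : (m : ℝ) * v ≤ (n : ℝ) * u := by
      apply mul_le_mul _ hvu (le_of_lt hv0) hnn
      rw [hmr]; linarith
    linarith
  have hD : 0 < 1 - ((n : ℝ) - 2) * u := by nlinarith
  have hp := fp_pow_bound v (le_of_lt hv0) m
  have h4 : v * (1 + v) ^ m ≤ v / (1 - (m : ℝ) * v) := by
    rw [le_div_iff₀ hd1]
    nlinarith [mul_le_mul_of_nonneg_left hp (le_of_lt hv0)]
  have heq : v * (1 - ((n : ℝ) - 2) * u) = u * (1 - ((n : ℝ) - 1) * v) := by
    rw [hu, hv]; field_simp; ring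
  have h5 : v / (1 - (m : ℝ) * v) = u / (1 - ((n : ℝ) - 2) * u) := by
    rw [div_eq_div_iff hd1.ne' hD.ne', hmr]; linarith [heq]
  have hC : v * (1 + v) ^ m ≤ u / (1 - ((n : ℝ) - 2) * u) := by rw [← h5]; exact h4
  refine le_trans hmain ?_
  have hbound : ∑ j ∈ Finset.Icc 1 n, (1 + v) ^ (n - j) * |∑ i ∈ Finset.range (j + 1), y i| ≤
      (1 + v) ^ m * ∑ j ∈ Finset.Icc 1 n, |∑ i ∈ Finset.range (j + 1), y i| := by
    rw [Finset.mul_sum]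
    apply Finset.sum_le_sum
    intro j hj
    have hj1 : 1 ≤ j := (Finset.mem_Icc.mp hj).1
    apply mul_le_mul_of_nonneg_right _ (abs_nonneg _)
    exact pow_le_pow_right₀ (by linarith) (by omega)
  calc v * ∑ j ∈ Finset.Icc 1 n, (1 + v) ^ (n - j) * |∑ i ∈ Finset.range (j + 1), y i|
      ≤ v * ((1 + v) ^ m * ∑ j ∈ Finset.Icc 1 n, |∑ i ∈ Finset.range (j + 1), y i|) :=
        mul_le_mul_of_nonneg_left hbound (le_of_lt hv0)
    _ = (v * (1 + v) ^ m) * ∑ j ∈ Finset.Icc 1 n, |∑ i ∈ Finset.range (j + 1), y i| := by ring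
    _ ≤ (u / (1 - ((n : ℝ) - 2) * u)) *
          ∑ j ∈ Finset.Icc 1 n, |∑ i ∈ Finset.range (j + 1), y i| := by
        apply mul_le_mul_of_nonneg_right hC
        exact Finset.sum_nonneg fun j _ => abs_nonneg _
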